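/- Let N ≥ 1, let α_1,…,α_N, β_1,…,β_N be complex numbers with |α_r| < 1 and 0 < |β_r| < 1 for all r, the β_r pairwise distinct, and let 0 = k_1 < k_2 < … < k_N and l_1 < l_2 < … < l_N be integers with l_N ≤ N−1. For 1 ≤ i, j ≤ N define G̃_{i,j} = (1/2πi)∮_{|z|=1} h_{k_1,…,k_N}(β; β_i↦z) · h_{l_1,…,l_N}(1/β; 1/β_j↦1/z) · ∏_{r=1}^N (1−α_r z)^{−1}(1−β_r/z)^{−1} · z^{−1} dz. Then G̃_{i,j} = 0 whenever i ≠ j, and G̃_{j,j} = h_{k_1,…,k_N}(β) · h_{l_1,…,l_N}(1/β) / [∏_{r=1}^N(1−α_r β_j) · ∏_{s=1, s≠j}^N (1−β_s/β_j)]. -/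

import Mathlib

/-- The alternating determinant `h_{κ(1),…,κ(N)}(β) = det(β_j^{κ_i})_{i,j=1}^N`, where the
sequences `κ` (integer exponents) and `β` are 1-indexed. -/
noncomputable def hdet (N : ℕ) (κ : ℕ → ℤ) (β : ℕ → ℂ) : ℂ :=
  Matrix.det (Matrix.of fun i j : Fin N => β ((j : ℕ) + 1) ^ κ ((i : ℕ) + 1))

/-- The determinant `h_{κ(1),…,κ(N)}(β; β_{j₀} ↦ z)`: the matrix `(β_j^{κ_i})` with the
`j₀`-th column replaced by `(z^{κ_i})_i`. -/
noncomputable def hdetSub (N : ℕ) (κ : ℕ → ℤ) (β : ℕ → ℂ) (j₀ : ℕ) (z : ℂ) : ℂ :=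
  Matrix.det (Matrix.of fun i j : Fin N =>
    if (j : ℕ) + 1 = j₀ then z ^ κ ((i : ℕ) + 1) else β ((j : ℕ) + 1) ^ κ ((i : ℕ) + 1))

/-- The Gramm matrix entry `G̃_{i,j}` of equation (3.12) of the paper. -/
noncomputable def Gtilde (N : ℕ) (κ lam : ℕ → ℤ) (α β : ℕ → ℂ) (i j : ℕ) : ℂ :=
  (1 / (2 * (Real.pi : ℂ) * Complex.I)) *
    ∮ z in C(0, 1),
      hdetSub N κ β i z * hdetSub N lam (fun t => (β t)⁻¹) j z⁻¹ *
        (∏ t ∈ Finset.Icc 1 N, ((1 - α t * z)⁻¹ * (1 - β t / z)⁻¹)) * z⁻¹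

open Complex Metric Finset



lemma my_circleIntegral_finset_sum {ι : Type*} (s : Finset ι) (F : ι → ℂ → ℂ) (c : ℂ) (R : ℝ)
    (h : ∀ t ∈ s, CircleIntegrable (F t) c R) :
    (∮ z in C(c, R), ∑ t ∈ s, F t z) = ∑ t ∈ s, ∮ z in C(c, R), F t z := by
  simp only [circleIntegral, Finset.smul_sum]
  exact intervalIntegral.integral_finset_sum fun t ht => (h t ht).out


lemma my_partial_fractions (b : ℕ → ℂ) (s : Finset ℕ) (hinj : Set.InjOn b s) :
    ∀ z : ℂ, (∀ t ∈ s, z ≠ b t) → s.Nonempty →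
      ∏ t ∈ s, (z - b t)⁻¹ =
        ∑ t ∈ s, (z - b t)⁻¹ * ∏ t' ∈ s.erase t, (b t - b t')⁻¹ := by
  induction s using Finset.induction_on with
  | empty => intro _ _ h; exact absurd h (by simp)
  | @insert a s ha ih =>
    intro z hz _
    have hinj' : Set.InjOn b s := hinj.mono (by intro x hx; exact Finset.mem_insert_of_mem hx)
    have hab : ∀ t ∈ s, b a ≠ b t := by
      intro t ht h
      exact ha (by rwa [hinj (Finset.mem_insert_self a s) (Finset.mem_insert_of_mem ht) h])
    rcases s.eq_empty_or_nonempty with rfl | hs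
    · simp
    have ihz := ih hinj' z (fun t ht => hz t (Finset.mem_insert_of_mem ht)) hs
    have iha := ih hinj' (b a) (hab) hs
    rw [Finset.prod_insert ha, Finset.sum_insert ha, Finset.erase_insert ha, ihz]
    have herase : ∀ t ∈ s, ∏ t' ∈ (insert a s).erase t, (b t - b t')⁻¹
        = (b t - b a)⁻¹ * ∏ t' ∈ s.erase t, (b t - b t')⁻¹ := by
      intro t ht
      rw [Finset.erase_insert_of_ne (by rintro rfl; exact ha ht),
        Finset.prod_insert (by simp [ha])]
    have hsum : ∑ x ∈ s, (z - b x)⁻¹ * ∏ t' ∈ (insert a s).erase x, (b x - b t')⁻¹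
        = ∑ x ∈ s, (z - b x)⁻¹ * ((b x - b a)⁻¹ * ∏ t' ∈ s.erase x, (b x - b t')⁻¹) :=
      Finset.sum_congr rfl fun t ht => by rw [herase t ht]
    rw [hsum, iha, Finset.mul_sum, Finset.mul_sum, ← Finset.sum_add_distrib]
    refine Finset.sum_congr rfl fun t ht => ?_
    have h1 : z - b a ≠ 0 := sub_ne_zero.2 (hz a (Finset.mem_insert_self a s))
    have h2 : z - b t ≠ 0 := sub_ne_zero.2 (hz t (Finset.mem_insert_of_mem ht))
    have h3 : b a - b t ≠ 0 := sub_ne_zero.2 (hab t ht)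
    have h4 : b t - b a ≠ 0 := fun h => h3 (by linear_combination -h)
    have key : (z - b a)⁻¹ * (z - b t)⁻¹
        = (b a - b t)⁻¹ * (z - b a)⁻¹ + (z - b t)⁻¹ * (b t - b a)⁻¹ := by
      field_simp
      ring
    linear_combination (∏ t' ∈ s.erase t, (b t - b t')⁻¹) * key

lemma my_residue_formula (s : Finset ℕ) (b : ℕ → ℂ) (hinj : Set.InjOn b s)
    (hb : ∀ t ∈ s, ‖b t‖ < 1) (g : ℂ → ℂ)
    (hg : DiffContOnCl ℂ g (Metric.ball 0 1)) :
    (∮ z in C(0, 1), g z * ∏ t ∈ s, (z - b t)⁻¹) =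
      (2 * Real.pi * Complex.I) * ∑ t ∈ s, g (b t) * ∏ t' ∈ s.erase t, (b t - b t')⁻¹ := by
  have hgc : ContinuousOn g (closedBall (0:ℂ) 1) := by
    have := hg.continuousOn
    rwa [closure_ball (0:ℂ) one_ne_zero] at this
  rcases s.eq_empty_or_nonempty with rfl | hs
  · simp only [Finset.prod_empty, mul_one, Finset.sum_empty, mul_zero]
    exact circleIntegral_eq_zero_of_differentiable_on_off_countable zero_le_one
      Set.countable_empty hgc (fun z hz => hg.differentiableAt isOpen_ball hz.1)
  have hsphere : ∀ z ∈ sphere (0:ℂ) 1, ∀ t ∈ s, z ≠ b t := by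
    intro z hz t ht h
    rw [mem_sphere_iff_norm, sub_zero, h] at hz
    have := hb t ht
    linarith
  have hcong : (∮ z in C(0, 1), g z * ∏ t ∈ s, (z - b t)⁻¹)
      = ∮ z in C(0, 1), ∑ t ∈ s, (∏ t' ∈ s.erase t, (b t - b t')⁻¹) • ((z - b t)⁻¹ • g z) := by
    refine circleIntegral.integral_congr zero_le_one fun z hz => ?_
    rw [mul_comm, my_partial_fractions b s hinj z (hsphere z hz) hs, Finset.sum_mul]
    exact Finset.sum_congr rfl fun t ht => by simp [smul_eq_mul]; ring
  rw [hcong, my_circleIntegral_finset_sum]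
  · have hterm : ∀ t ∈ s, (∮ z in C(0, 1), (∏ t' ∈ s.erase t, (b t - b t')⁻¹) • ((z - b t)⁻¹ • g z))
        = (∏ t' ∈ s.erase t, (b t - b t')⁻¹) • ((2 * Real.pi * Complex.I : ℂ) • g (b t)) := by
      intro t ht
      rw [circleIntegral.integral_smul, hg.circleIntegral_sub_inv_smul
        (by rw [mem_ball_zero_iff]; exact hb t ht)]
    rw [Finset.sum_congr rfl hterm, Finset.mul_sum]
    exact Finset.sum_congr rfl fun t ht => by simp [smul_eq_mul]; ring
  · intro t ht
    apply ContinuousOn.circleIntegrable zero_le_one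
    apply ContinuousOn.fun_smul continuousOn_const
    apply ContinuousOn.fun_smul
    · exact ((continuousOn_id.sub continuousOn_const).inv₀
        (fun z hz => sub_ne_zero.2 (hsphere z hz t ht)))
    · exact hgc.mono sphere_subset_closedBall

lemma my_differentiable_det {n : ℕ} (A : ℂ → Matrix (Fin n) (Fin n) ℂ)
    (h : ∀ i j, Differentiable ℂ fun z => A z i j) :
    Differentiable ℂ fun z => (A z).det := by
  simp only [Matrix.det_apply, Units.smul_def, zsmul_eq_mul]
  apply Differentiable.fun_sum
  intro σ _
  exact (differentiable_const _).mul (Differentiable.fun_finset_prod fun i _ => h (σ i) i)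

lemma my_hdetSub_eq (N : ℕ) (κ : ℕ → ℤ) (β : ℕ → ℂ) (j₀ : Fin N) (z : ℂ) :
    hdetSub N κ β ((j₀ : ℕ) + 1) z =
      Matrix.det ((Matrix.of fun i j : Fin N => β ((j : ℕ) + 1) ^ κ ((i : ℕ) + 1)).updateCol j₀
        fun i => z ^ κ ((i : ℕ) + 1)) := by
  unfold hdetSub
  congr 1
  ext i j
  simp only [Matrix.of_apply, Matrix.updateCol_apply]
  by_cases h : j = j₀
  · simp [h]
  · rw [if_neg (fun hc => h (Fin.ext (by omega))), if_neg h]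

lemma my_hdetSub_dup (N : ℕ) (κ : ℕ → ℤ) (β : ℕ → ℂ) {t i : ℕ} (h1t : 1 ≤ t) (htN : t ≤ N)
    (h1i : 1 ≤ i) (hiN : i ≤ N) (hne : t ≠ i) : hdetSub N κ β i (β t) = 0 := by
  refine Matrix.det_zero_of_column_eq (M := Matrix.of fun k l : Fin N =>
      if (l : ℕ) + 1 = i then (β t) ^ κ ((k : ℕ) + 1) else β ((l : ℕ) + 1) ^ κ ((k : ℕ) + 1))
    (i := (⟨t - 1, by omega⟩ : Fin N)) (j := ⟨i - 1, by omega⟩) ?_ ?_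
  · intro h
    have := congrArg Fin.val h
    simp only at this
    omega
  · intro k
    simp only [Matrix.of_apply]
    rw [if_neg (by omega), if_pos (by omega)]
    congr 2
    omega

lemma my_hdetSub_self (N : ℕ) (κ : ℕ → ℤ) (β : ℕ → ℂ) {j : ℕ} :
    hdetSub N κ β j (β j) = hdet N κ β := by
  unfold hdetSub hdet
  congr 1
  ext k l
  simp only [Matrix.of_apply]
  split
  · next h => rw [show l + (1:ℕ) = j from h]
  · rfl

lemma Gtilde_eq (N : ℕ) (hN : 1 ≤ N) (α β : ℕ → ℂ)
    (hα : ∀ i, 1 ≤ i → i ≤ N → ‖α i‖ < 1)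
    (hβ : ∀ i, 1 ≤ i → i ≤ N → 0 < ‖β i‖ ∧ ‖β i‖ < 1)
    (hdist : ∀ i j, 1 ≤ i → i ≤ N → 1 ≤ j → j ≤ N → i ≠ j → β i ≠ β j)
    (κ lam : ℕ → ℤ) (hκ0 : κ 1 = 0)
    (hκ : ∀ i j, 1 ≤ i → i < j → j ≤ N → κ i < κ j)
    (hlam : ∀ i j, 1 ≤ i → i < j → j ≤ N → lam i < lam j)
    (hlamN : lam N ≤ (N : ℤ) - 1) (i j : ℕ)
    (h1i : 1 ≤ i) (hiN : i ≤ N) (h1j : 1 ≤ j) (hjN : j ≤ N) :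
    Gtilde N κ lam α β i j = ∑ t ∈ Finset.Icc 1 N,
      hdetSub N κ β i (β t) * ((β t) ^ (N - 1) *
        hdetSub N lam (fun r => (β r)⁻¹) j (β t)⁻¹) *
      (∏ r ∈ Finset.Icc 1 N, (1 - α r * β t)⁻¹) *
      ∏ t' ∈ (Finset.Icc 1 N).erase t, (β t - β t')⁻¹ := by
  -- basic positivity facts on the exponents
  have hκnn : ∀ m, 1 ≤ m → m ≤ N → 0 ≤ κ m := by
    intro m h1 h2
    rcases eq_or_lt_of_le h1 with h | h
    · rw [← h, hκ0]
    · rw [← hκ0]; exact le_of_lt (hκ 1 m le_rfl h h2)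
  have hlamle : ∀ m, 1 ≤ m → m ≤ N → lam m ≤ (N : ℤ) - 1 := by
    intro m h1 h2
    rcases eq_or_lt_of_le h2 with h | h
    · rw [h]; exact hlamN
    · exact le_of_lt (lt_of_lt_of_le (hlam m N h1 h le_rfl) hlamN)
  have hβ0 : ∀ t, 1 ≤ t → t ≤ N → β t ≠ 0 := fun t h1 h2 => by
    have := (hβ t h1 h2).1
    intro h; rw [h] at this; simp at this
  -- Fin-indexed versions of the defining matrices
  set Mκ : Matrix (Fin N) (Fin N) ℂ :=
    Matrix.of fun i' j' : Fin N => β ((j' : ℕ) + 1) ^ κ ((i' : ℕ) + 1) with hMκ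
  set Mlam : Matrix (Fin N) (Fin N) ℂ :=
    Matrix.of fun i' j' : Fin N => (β ((j' : ℕ) + 1))⁻¹ ^ lam ((i' : ℕ) + 1) with hMlam
  set ifin : Fin N := ⟨i - 1, by omega⟩ with hifin
  set jfin : Fin N := ⟨j - 1, by omega⟩ with hjfin
  have hival : (ifin : ℕ) + 1 = i := by simp [hifin]; omega
  have hjval : (jfin : ℕ) + 1 = j := by simp [hjfin]; omega
  set P : ℂ → ℂ := fun z =>
    (Mκ.updateCol ifin fun k => z ^ (κ ((k : ℕ) + 1)).toNat).det with hP
  set Q : ℂ → ℂ := fun z =>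
    (Mlam.updateCol jfin fun k => z ^ ((N : ℤ) - 1 - lam ((k : ℕ) + 1)).toNat).det with hQ
  -- F1 : hdetSub equals the polynomial P
  have F1 : ∀ z : ℂ, hdetSub N κ β i z = P z := by
    intro z
    have hcol : (fun k : Fin N => z ^ κ ((k : ℕ) + 1))
        = fun k : Fin N => z ^ (κ ((k : ℕ) + 1)).toNat := by
      funext k
      rw [← zpow_natCast z (κ ((k : ℕ) + 1)).toNat,
        Int.toNat_of_nonneg (hκnn ((k : ℕ) + 1) (by omega) (by omega))]
    rw [← hival, my_hdetSub_eq N κ β ifin z, ← hMκ, hcol, hP]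
  -- F2 : z ^ (N-1) * hdetSub(..., z⁻¹) equals the polynomial Q
  have F2 : ∀ z : ℂ, z ≠ 0 → z ^ (N - 1) * hdetSub N lam (fun r => (β r)⁻¹) j z⁻¹ = Q z := by
    intro z hz
    have hcol : ((z ^ (N - 1) : ℂ) • fun k : Fin N => (z⁻¹) ^ lam ((k : ℕ) + 1))
        = fun k : Fin N => z ^ ((N : ℤ) - 1 - lam ((k : ℕ) + 1)).toNat := by
      funext k
      have hm : lam ((k : ℕ) + 1) ≤ (N : ℤ) - 1 := hlamle _ (by omega) (by omega)
      simp only [Pi.smul_apply, smul_eq_mul]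
      rw [← zpow_natCast z ((N : ℤ) - 1 - lam ((k : ℕ) + 1)).toNat,
        Int.toNat_of_nonneg (by omega : (0:ℤ) ≤ (N : ℤ) - 1 - lam ((k : ℕ) + 1)),
        inv_zpow, ← zpow_neg, ← zpow_natCast z (N - 1), ← zpow_add₀ hz,
        show ((N - 1 : ℕ) : ℤ) + -lam ((k : ℕ) + 1) = (N : ℤ) - 1 - lam ((k : ℕ) + 1) by omega]
    rw [← hjval, my_hdetSub_eq N lam (fun r => (β r)⁻¹) jfin z⁻¹, ← hMlam,
      ← Matrix.det_updateCol_smul, hcol, hQ]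
  -- the analytic part g
  set g : ℂ → ℂ := fun z => P z * Q z * ∏ t ∈ Finset.Icc 1 N, (1 - α t * z)⁻¹ with hg
  have hαz : ∀ t ∈ Finset.Icc 1 N, ∀ z ∈ closedBall (0:ℂ) 1, 1 - α t * z ≠ 0 := by
    intro t ht z hz h
    rw [Finset.mem_Icc] at ht
    have h1 : α t * z = 1 := by linear_combination -h
    have h2 : ‖α t * z‖ = 1 := by rw [h1]; simp
    rw [norm_mul] at h2
    have h3 := hα t ht.1 ht.2
    have h4 : ‖z‖ ≤ 1 := by rwa [mem_closedBall_zero_iff] at hz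
    nlinarith [norm_nonneg (α t), norm_nonneg z]
  have hPdiff : Differentiable ℂ P := by
    apply my_differentiable_det
    intro k l
    simp only [Matrix.updateCol_apply]
    by_cases h : l = ifin
    · simp only [h, if_pos rfl]; exact differentiable_pow _
    · simp only [if_neg h]; exact differentiable_const _
  have hQdiff : Differentiable ℂ Q := by
    apply my_differentiable_det
    intro k l
    simp only [Matrix.updateCol_apply]
    by_cases h : l = jfin
    · simp only [h, if_pos rfl]; exact differentiable_pow _
    · simp only [if_neg h]; exact differentiable_const _
  have hgdiff : DiffContOnCl ℂ g (ball 0 1) := by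
    apply DifferentiableOn.diffContOnCl
    rw [closure_ball (0:ℂ) one_ne_zero]
    apply DifferentiableOn.mul
    · exact (hPdiff.differentiableOn.mul hQdiff.differentiableOn)
    · apply DifferentiableOn.fun_finset_prod
      intro t ht
      exact DifferentiableOn.inv
        ((differentiableOn_const _).sub ((differentiable_id.const_mul _).differentiableOn))
        (fun z hz => hαz t ht z hz)
  -- points on the sphere avoid 0 and the β's
  have hsz : ∀ z : ℂ, z ∈ sphere (0:ℂ) 1 → z ≠ 0 ∧ ∀ t ∈ Finset.Icc 1 N, z - β t ≠ 0 := by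
    intro z hz
    rw [mem_sphere_iff_norm, sub_zero] at hz
    constructor
    · intro h; rw [h] at hz; simp at hz
    · intro t ht h
      rw [Finset.mem_Icc] at ht
      have h2 := (hβ t ht.1 ht.2).2
      have : z = β t := by linear_combination h
      rw [this] at hz
      linarith
  -- the integrand agrees with g z * ∏ (z - β t)⁻¹ on the unit circle
  have hEq : Set.EqOn
      (fun z => hdetSub N κ β i z * hdetSub N lam (fun t => (β t)⁻¹) j z⁻¹ *
        (∏ t ∈ Finset.Icc 1 N, ((1 - α t * z)⁻¹ * (1 - β t / z)⁻¹)) * z⁻¹)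
      (fun z => g z * ∏ t ∈ Finset.Icc 1 N, (z - β t)⁻¹) (sphere 0 1) := by
    intro z hz
    obtain ⟨hz0, hzb⟩ := hsz z hz
    simp only
    have hprod : ∀ t ∈ Finset.Icc 1 N,
        (1 - α t * z)⁻¹ * (1 - β t / z)⁻¹ = (1 - α t * z)⁻¹ * (z * (z - β t)⁻¹) := by
      intro t ht
      congr 1
      rw [show (1 : ℂ) - β t / z = (z - β t) * z⁻¹ by field_simp, mul_inv, inv_inv]
      ring
    rw [Finset.prod_congr rfl hprod, Finset.prod_mul_distrib, Finset.prod_mul_distrib,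
      Finset.prod_const, Nat.card_Icc]
    have hzN : z ^ (N + 1 - 1) = z ^ (N - 1) * z := by
      rw [show N + 1 - 1 = (N - 1) + 1 by omega, pow_succ]
    simp only [hg]
    rw [F1 z, ← F2 z hz0, hzN]
    have hzz : z * z⁻¹ = 1 := mul_inv_cancel₀ hz0
    linear_combination (P z * hdetSub N lam (fun t => (β t)⁻¹) j z⁻¹ *
      (∏ t ∈ Finset.Icc 1 N, (1 - α t * z)⁻¹) *
      (∏ t ∈ Finset.Icc 1 N, (z - β t)⁻¹) * z ^ (N - 1)) * hzz
  -- apply the residue formula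
  have hinj : Set.InjOn β (Finset.Icc 1 N) := by
    intro a ha b hb h
    by_contra hab
    rw [Finset.coe_Icc, Set.mem_Icc] at ha hb
    exact hdist a b ha.1 ha.2 hb.1 hb.2 hab h
  rw [Gtilde, circleIntegral.integral_congr zero_le_one hEq,
    my_residue_formula (Finset.Icc 1 N) β hinj
      (fun t ht => (hβ t (Finset.mem_Icc.1 ht).1 (Finset.mem_Icc.1 ht).2).2) g hgdiff]
  rw [← mul_assoc, one_div, inv_mul_cancel₀ (by
    simp [Complex.ext_iff, Real.pi_ne_zero, Complex.I_ne_zero] : (2 * (Real.pi:ℂ) * Complex.I) ≠ 0),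
    one_mul]
  refine Finset.sum_congr rfl fun t ht => ?_
  rw [Finset.mem_Icc] at ht
  simp only [hg]
  rw [F1 (β t), ← F2 (β t) (hβ0 t ht.1 ht.2)]


/-- the Gramm matrix `G̃` is diagonal, with the indicated diagonal entries
(equation (3.13) of the paper). -/
theorem gramm_matrix_diagonal (N : ℕ) (hN : 1 ≤ N) (α β : ℕ → ℂ)
    (hα : ∀ i, 1 ≤ i → i ≤ N → ‖α i‖ < 1)
    (hβ : ∀ i, 1 ≤ i → i ≤ N → 0 < ‖β i‖ ∧ ‖β i‖ < 1)
    (hdist : ∀ i j, 1 ≤ i → i ≤ N → 1 ≤ j → j ≤ N → i ≠ j → β i ≠ β j)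
    (κ lam : ℕ → ℤ) (hκ0 : κ 1 = 0)
    (hκ : ∀ i j, 1 ≤ i → i < j → j ≤ N → κ i < κ j)
    (hlam : ∀ i j, 1 ≤ i → i < j → j ≤ N → lam i < lam j)
    (hlamN : lam N ≤ (N : ℤ) - 1) :
    ∀ i j, 1 ≤ i → i ≤ N → 1 ≤ j → j ≤ N →
      (i ≠ j → Gtilde N κ lam α β i j = 0) ∧
      Gtilde N κ lam α β j j =
        hdet N κ β * hdet N lam (fun t => (β t)⁻¹) /
          ((∏ t ∈ Finset.Icc 1 N, (1 - α t * β j)) *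
            ∏ s ∈ (Finset.Icc 1 N).erase j, (1 - β s / β j)) := by
  intro i j h1i hiN h1j hjN
  have hβ0 : ∀ t, 1 ≤ t → t ≤ N → β t ≠ 0 := fun t h1 h2 => by
    have := (hβ t h1 h2).1
    intro h; rw [h] at this; simp at this
  constructor
  · -- off-diagonal entries vanish
    intro hne
    rw [Gtilde_eq N hN α β hα hβ hdist κ lam hκ0 hκ hlam hlamN i j h1i hiN h1j hjN]
    apply Finset.sum_eq_zero
    intro t ht
    rw [Finset.mem_Icc] at ht
    by_cases hti : t = i
    · have htj : t ≠ j := by rw [hti]; exact hne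
      have h0 : hdetSub N lam (fun r => (β r)⁻¹) j ((β t)⁻¹) = 0 :=
        my_hdetSub_dup N lam (fun r => (β r)⁻¹) ht.1 ht.2 h1j hjN htj
      rw [h0]
      ring
    · have h0 : hdetSub N κ β i (β t) = 0 := my_hdetSub_dup N κ β ht.1 ht.2 h1i hiN hti
      rw [h0]
      ring
  · -- diagonal entries
    rw [Gtilde_eq N hN α β hα hβ hdist κ lam hκ0 hκ hlam hlamN j j h1j hjN h1j hjN]
    rw [Finset.sum_eq_single_of_mem j (Finset.mem_Icc.2 ⟨h1j, hjN⟩) (fun t ht htj => by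
      rw [Finset.mem_Icc] at ht
      have h0 : hdetSub N κ β j (β t) = 0 := my_hdetSub_dup N κ β ht.1 ht.2 h1j hjN htj
      rw [h0]
      ring)]
    have e1 : hdetSub N κ β j (β j) = hdet N κ β := my_hdetSub_self N κ β
    have e2 : hdetSub N lam (fun r => (β r)⁻¹) j ((β j)⁻¹) = hdet N lam fun r => (β r)⁻¹ :=
      my_hdetSub_self N lam (fun r => (β r)⁻¹)
    rw [e1, e2]
    have hβj : β j ≠ 0 := hβ0 j h1j hjN
    -- rewrite the denominator product
    have hd1 : ∏ s ∈ (Finset.Icc 1 N).erase j, (1 - β s / β j)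
        = (∏ s ∈ (Finset.Icc 1 N).erase j, (β j - β s)) * ((β j)⁻¹) ^ (N - 1) := by
      rw [Finset.prod_congr rfl (fun s _ =>
        show (1 : ℂ) - β s / β j = (β j - β s) * (β j)⁻¹ by field_simp),
        Finset.prod_mul_distrib, Finset.prod_const,
        Finset.card_erase_of_mem (Finset.mem_Icc.2 ⟨h1j, hjN⟩), Nat.card_Icc,
        show N + 1 - 1 - 1 = N - 1 by omega]
    rw [hd1, Finset.prod_inv_distrib, Finset.prod_inv_distrib, inv_pow, div_eq_mul_inv,
      mul_inv, mul_inv, inv_inv]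
    ring
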